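/- Let λ(t) solve the Vickrey point queue with constant supply σ > 0: λ(t) = F(t) − G(t) where G(t) = min_{0≤τ≤t}{F(τ)−στ} + σt, F continuous nondecreasing, F(0)=0. Then F(t) = G(t + λ(t)/σ) for all t ≥ 0; i.e., a vehicle entering the queue at time t experiences queueing time π(t) = λ(t)/σ. -/

import Mathlib

/-- Vickrey point queue with constant supply: queueing time is λ(t)/σ, i.e. F(t) = G(t + λ(t)/σ). -/
theorem stmt_9 (F G : ℝ → ℝ) (σ : ℝ) (hσ : 0 < σ)
    (hF0 : F 0 = 0) (hFmono : Monotone F) (hFcont : Continuous F)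
    (hG : ∀ t, 0 ≤ t →
      G t = sInf ((fun τ => F τ - σ * τ) '' Set.Icc 0 t) + σ * t) :
    ∀ t, 0 ≤ t → F t = G (t + (F t - G t) / σ) := by
  intro t ht
  set f : ℝ → ℝ := fun τ => F τ - σ * τ with hf
  have hfc : Continuous f := hFcont.sub (continuous_const.mul continuous_id)
  have hbdd : ∀ s : ℝ, BddBelow (f '' Set.Icc 0 s) :=
    fun s => ((isCompact_Icc).image hfc).bddBelow
  have hmem : ∀ s τ : ℝ, 0 ≤ τ → τ ≤ s → f τ ∈ f '' Set.Icc 0 s :=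
    fun s τ h0 h1 => ⟨τ, ⟨h0, h1⟩, rfl⟩
  have hGt := hG t ht
  have hinf_le : sInf (f '' Set.Icc 0 t) ≤ f t := csInf_le (hbdd t) (hmem t t ht le_rfl)
  have hlam : 0 ≤ F t - G t := by
    have : f t = F t - σ * t := rfl
    rw [hGt]; linarith
  set t' := t + (F t - G t) / σ with ht'def
  have ht' : 0 ≤ t' := by
    have : 0 ≤ (F t - G t) / σ := div_nonneg hlam hσ.le
    rw [ht'def]; linarith
  have htt' : t ≤ t' := by
    have : 0 ≤ (F t - G t) / σ := div_nonneg hlam hσ.le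
    rw [ht'def]; linarith
  have hσt' : σ * t' = σ * t + (F t - G t) := by
    rw [ht'def]; field_simp
  have hGt' := hG t' ht'
  have hset : sInf (f '' Set.Icc 0 t') = sInf (f '' Set.Icc 0 t) := by
    apply le_antisymm
    · exact csInf_le_csInf (hbdd t') ⟨f t, hmem t t ht le_rfl⟩
        (Set.image_mono (f := f) (Set.Icc_subset_Icc_right htt'))
    · apply le_csInf ⟨f t', hmem t' t' ht' le_rfl⟩
      rintro x ⟨τ, ⟨hτ0, hτt'⟩, rfl⟩
      by_cases hc : τ ≤ t
      · exact csInf_le (hbdd t) (hmem t τ hτ0 hc)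
      · have h1 : F t ≤ F τ := hFmono (le_of_lt (not_le.1 hc))
        have h2 : σ * τ ≤ σ * t' := by nlinarith
        have : F t - σ * t' ≤ f τ := by
          simp only [hf]; linarith
        have hkey : sInf (f '' Set.Icc 0 t) = F t - σ * t' := by
          rw [hσt']; linarith [hGt]
        linarith
  rw [hGt', hset, hσt']
  linarith [hGt]
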